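/- Let G = (V, E) be a cactus graph. Then msr(Ḡ) ≤ 5, where Ḡ is the complement of G. -/

import Mathlib

/-- The minimum semidefinite rank of a simple graph `G` on vertex set `Fin n`:
the minimum rank of a real symmetric positive semidefinite matrix whose
off-diagonal zero/nonzero pattern matches the (non-)adjacency of `G`. -/
noncomputable def msr {n : ℕ} (G : SimpleGraph (Fin n)) : ℕ :=
  sInf { r : ℕ | ∃ A : Matrix (Fin n) (Fin n) ℝ, A.PosSemidef ∧
    (∀ i j : Fin n, i ≠ j → (A i j ≠ 0 ↔ G.Adj i j)) ∧ A.rank = r }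

/-- A cactus graph: a simple connected graph in which every edge belongs to at
most one cycle, i.e. any two cycles sharing a common edge have the same edge set. -/
def IsCactus {n : ℕ} (G : SimpleGraph (Fin n)) : Prop :=
  G.Connected ∧
    ∀ (u w : Fin n) (p : G.Walk u u) (q : G.Walk w w), p.IsCycle → q.IsCycle →
      ∀ e ∈ p.edges, e ∈ q.edges → ∀ e', (e' ∈ p.edges ↔ e' ∈ q.edges)


open SimpleGraph Walk

lemma edge_start {V : Type*} {G : SimpleGraph V} {u w z : V} (p : G.Walk u w)
    (hp : p.support.Nodup) (h : s(z, u) ∈ p.edges) :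
    p.support.tail.head? = some z := by
  cases p with
  | nil => simp at h
  | @cons _ b _ hadj q =>
    simp only [SimpleGraph.Walk.edges_cons, List.mem_cons] at h
    rcases h with h | h
    · rw [Sym2.eq_iff] at h
      rcases h with ⟨hzu, hub⟩ | ⟨hzb, _⟩
      · exact absurd (hzu ▸ hub) hadj.ne
      · rw [SimpleGraph.Walk.support_cons, List.tail_cons, q.support_eq_cons]
        rw [List.head?_cons, hzb]
    · exfalso
      have hu : u ∈ q.support := SimpleGraph.Walk.snd_mem_support_of_mem_edges q h
      simp only [SimpleGraph.Walk.support_cons, List.nodup_cons] at hp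
      exact hp.1 hu

lemma cycle_of_neighbor {V : Type*} [DecidableEq V] {G : SimpleGraph V} {u w y : V}
    (p : G.Walk u w) (hp : p.IsPath) (htail : p.support.tail ≠ [])
    (hady : G.Adj u y) (hysup : y ∈ p.support)
    (hyv1 : y ≠ p.support.tail.head htail) :
    ∃ c : G.Walk u u, c.IsCycle ∧ s(u, p.support.tail.head htail) ∈ c.edges ∧
      s(u, y) ∈ c.edges ∧
      ∀ z, s(z, u) ∈ c.edges → z = y ∨ z = p.support.tail.head htail := by
  set v1 := p.support.tail.head htail with hv1def
  have hv1 : p.support.tail.head? = some v1 := List.head?_eq_head htail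
  have hyu : y ≠ u := hady.ne'
  set ty := p.takeUntil y hysup with hty
  set dr := p.dropUntil y hysup with hdr
  have hspec : ty.append dr = p := p.take_spec hysup
  have hsup : p.support = ty.support ++ dr.support.tail := by
    rw [← hspec, Walk.support_append]
  have htytail : ty.support.tail ≠ [] := by
    intro h
    have := ty.end_mem_support
    rw [ty.support_eq_cons, h, List.mem_singleton] at this
    exact hyu this
  have hsuptail : p.support.tail = ty.support.tail ++ dr.support.tail := by
    rw [hsup, ty.support_eq_cons, List.cons_append, List.tail_cons]
    rw [← ty.support_eq_cons]
  have ha : ty.support.tail.head? = some v1 := by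
    rw [hsuptail, List.head?_append_of_ne_nil _ htytail] at hv1
    exact hv1
  have htypath : ty.IsPath := hp.takeUntil hysup
  -- s(u, y) ∉ ty.edges
  have hc : s(u, y) ∉ ty.edges := by
    intro h
    rw [Sym2.eq_swap] at h
    have := edge_start ty htypath.support_nodup h
    rw [ha] at this
    exact hyv1 (Option.some_injective _ this).symm
  -- the cycle
  refine ⟨Walk.cons hady ty.reverse, ?_, ?_, ?_, ?_⟩
  · rw [Walk.cons_isCycle_iff]
    refine ⟨htypath.reverse, ?_⟩
    rw [Walk.edges_reverse, List.mem_reverse]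
    exact hc
  · -- s(u, v1) ∈ edges
    have he1p : s(u, v1) ∈ p.edges := by
      cases p with
      | nil => simp at htail
      | @cons _ b _ hadj q =>
        have : v1 = b := by
          have : (Walk.cons hadj q).support.tail.head? = some b := by
            rw [Walk.support_cons, List.tail_cons, q.support_eq_cons]; rfl
          rw [hv1] at this
          exact (Option.some_injective _ this)
        rw [this]
        simp
    have hedges : p.edges = ty.edges ++ dr.edges := by
      rw [← hspec, Walk.edges_append]
    rw [hedges, List.mem_append] at he1p
    rcases he1p with h | h
    · rw [Walk.edges_cons]
      exact List.mem_cons_of_mem _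
        (by rw [Walk.edges_reverse]; exact List.mem_reverse.mpr h)
    · exfalso
      have husup : u ∈ dr.support := Walk.fst_mem_support_of_mem_edges dr h
      rw [dr.support_eq_cons, List.mem_cons] at husup
      rcases husup with h' | h'
      · exact hyu h'.symm
      · have hnd : (ty.support ++ dr.support.tail).Nodup := by
          rw [← hsup]; exact hp.support_nodup
        exact (List.disjoint_of_nodup_append hnd) ty.start_mem_support h'
  · rw [Walk.edges_cons]; exact List.mem_cons_self
  · intro z hz
    rw [Walk.edges_cons, List.mem_cons] at hz
    rcases hz with h | h
    · rw [Sym2.eq_iff] at h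
      rcases h with ⟨hzu, huy⟩ | ⟨hzy, _⟩
      · exact absurd huy hady.ne
      · exact Or.inl hzy
    · rw [Walk.edges_reverse, List.mem_reverse] at h
      have := edge_start ty htypath.support_nodup h
      rw [ha] at this
      exact Or.inr (Option.some_injective _ this.symm)


lemma cactus_degeneracy {n : ℕ} {G : SimpleGraph (Fin n)} [DecidableRel G.Adj]
    (hG : ∀ (u w : Fin n) (p : G.Walk u u) (q : G.Walk w w), p.IsCycle → q.IsCycle →
      ∀ e ∈ p.edges, e ∈ q.edges → ∀ e', (e' ∈ p.edges ↔ e' ∈ q.edges))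
    (S : Finset (Fin n)) (hS : S.Nonempty) :
    ∃ x ∈ S, (S.filter (G.Adj x)).card ≤ 2 := by
  classical
  by_contra hmin
  push_neg at hmin
  -- maximal path inside S
  set L : Set ℕ := {l : ℕ | ∃ (u w : Fin n) (p : G.Walk u w),
      p.IsPath ∧ (∀ z ∈ p.support, z ∈ S) ∧ p.length = l} with hL
  obtain ⟨x₀, hx₀⟩ := hS
  have hLne : L.Nonempty := ⟨0, x₀, x₀, Walk.nil, Walk.IsPath.nil, by simpa using hx₀, rfl⟩
  have hLbdd : BddAbove L := by
    refine ⟨n, fun l hl => ?_⟩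
    obtain ⟨u, w, p, hp, -, hlen⟩ := hl
    have h1 : p.support.length ≤ n := by
      simpa using hp.support_nodup.length_le_card
    have h2 : p.support.length = p.length + 1 := p.length_support
    omega
  obtain ⟨u, w, p, hp, hpS, hlen⟩ := Nat.sSup_mem hLne hLbdd
  have hu : u ∈ S := hpS u p.start_mem_support
  -- all S-neighbors of u lie on p
  have hnb : ∀ y, G.Adj u y → y ∈ S → y ∈ p.support := by
    intro y hadj hyS
    by_contra hy
    have hq : (Walk.cons hadj.symm p).IsPath := hp.cons hy
    have hqS : ∀ z ∈ (Walk.cons hadj.symm p).support, z ∈ S := by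
      intro z hz
      rw [Walk.support_cons, List.mem_cons] at hz
      rcases hz with rfl | hz
      · exact hyS
      · exact hpS z hz
    have : sSup L + 1 ≤ sSup L := by
      have : sSup L + 1 ∈ L := ⟨y, w, Walk.cons hadj.symm p, hq, hqS, by simp [hlen]⟩
      exact le_csSup hLbdd this
    omega
  have hcard : 2 < (S.filter (G.Adj u)).card := hmin u hu
  -- the second vertex of p
  obtain ⟨y₀, hy₀⟩ := Finset.card_pos.mp (by omega : 0 < (S.filter (G.Adj u)).card)
  rw [Finset.mem_filter] at hy₀
  have hy₀sup : y₀ ∈ p.support := hnb y₀ hy₀.2 hy₀.1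
  have hy₀ne : y₀ ≠ u := fun h => G.irrefl (h ▸ hy₀.2)
  have htail_ne : p.support.tail ≠ [] := by
    intro h
    rw [p.support_eq_cons, h, List.mem_singleton] at hy₀sup
    exact hy₀ne hy₀sup
  set v1 : Fin n := p.support.tail.head htail_ne with hv1def
  have hv1 : p.support.tail.head? = some v1 := List.head?_eq_head htail_ne
  -- pick two neighbors distinct from v1 and from each other
  have hcard2 : 1 < ((S.filter (G.Adj u)).erase v1).card := by
    have := Finset.pred_card_le_card_erase (a := v1) (s := S.filter (G.Adj u))
    omega
  obtain ⟨y, hy, z, hz, hyz⟩ := Finset.one_lt_card.mp hcard2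
  have hyv1 : y ≠ v1 := Finset.ne_of_mem_erase hy
  have hzv1 : z ≠ v1 := Finset.ne_of_mem_erase hz
  rw [Finset.mem_erase, Finset.mem_filter] at hy hz
  have hady : G.Adj u y := hy.2.2
  have hadz : G.Adj u z := hz.2.2
  have hysup : y ∈ p.support := hnb y hady hy.2.1
  have hzsup : z ∈ p.support := hnb z hadz hz.2.1
  have hyv1' : y ≠ p.support.tail.head htail_ne := hyv1
  have hzv1' : z ≠ p.support.tail.head htail_ne := hzv1
  obtain ⟨cy, hcy, he1y, -, hky⟩ :=
    cycle_of_neighbor p hp htail_ne hady hysup hyv1'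
  obtain ⟨cz, hcz, he1z, heuz, -⟩ :=
    cycle_of_neighbor p hp htail_ne hadz hzsup hzv1'
  have he'z : s(z, u) ∈ cz.edges := by rwa [Sym2.eq_swap]
  have he'y : s(z, u) ∈ cy.edges :=
    (hG u u cy cz hcy hcz _ he1y he1z s(z, u)).mpr he'z
  rcases hky z he'y with h | h
  · exact hyz h.symm
  · exact hzv1 h


open Submodule in
lemma avoid_subspaces {E : Type*} [AddCommGroup E] [Module ℝ E]
    (W : Submodule ℝ E) (T : Finset (Submodule ℝ E)) (hT : ∀ U ∈ T, ¬ W ≤ U) :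
    ∃ w ∈ W, ∀ U ∈ T, w ∉ U := by
  classical
  set s : Finset (Subspace ℝ W) := T.image (fun U => U.comap W.subtype) with hs
  have htop : ⊤ ∉ s := by
    intro h
    rw [hs, Finset.mem_image] at h
    obtain ⟨U, hU, hUc⟩ := h
    refine hT U hU (fun x hx => ?_)
    have : (⟨x, hx⟩ : W) ∈ U.comap W.subtype := by rw [hUc]; trivial
    simpa using this
  have := Subspace.biUnion_ne_univ_of_top_notMem (s := s) htop
  rw [Set.ne_univ_iff_exists_notMem] at this
  obtain ⟨x, hx⟩ := this
  refine ⟨x.1, x.2, fun U hU hxU => hx ?_⟩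
  simp only [Set.mem_iUnion]
  exact ⟨U.comap W.subtype, Finset.mem_image_of_mem _ hU, hxU⟩

open RealInnerProductSpace in
lemma exists_vectors {n : ℕ} {G : SimpleGraph (Fin n)} [DecidableRel G.Adj]
    (hd : ∀ S : Finset (Fin n), S.Nonempty → ∃ x ∈ S, (S.filter (G.Adj x)).card ≤ 2) :
    ∀ (m : ℕ) (S : Finset (Fin n)), S.card ≤ m →
      ∃ v : Fin n → EuclideanSpace ℝ (Fin 5),
        (∀ i ∈ S, ∀ j ∈ S, i ≠ j → (⟪v i, v j⟫ = 0 ↔ G.Adj i j)) ∧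
        (∀ i ∈ S, ∀ N ⊆ S.erase i, N.card ≤ 2 →
          v i ∉ Submodule.span ℝ (v '' ↑N)) := by
  classical
  intro m
  induction m with
  | zero =>
    intro S hS
    rw [Nat.le_zero, Finset.card_eq_zero] at hS
    subst hS
    exact ⟨fun _ => 0, by simp, by simp⟩
  | succ m ih =>
    intro S hS
    rcases S.eq_empty_or_nonempty with rfl | hSne
    · exact ⟨fun _ => 0, by simp, by simp⟩
    obtain ⟨x, hxS, hxdeg⟩ := hd S hSne
    set S' := S.erase x with hS'
    have hS'card : S'.card ≤ m := by
      have h1 : 1 ≤ S.card := Finset.card_pos.mpr hSne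
      rw [hS', Finset.card_erase_of_mem hxS]
      omega
    obtain ⟨v, hvinner, hvspan⟩ := ih S' hS'card
    set N := S'.filter (G.Adj x) with hN
    have hNsub : N ⊆ S' := Finset.filter_subset _ _
    have hNcard : N.card ≤ 2 := by
      refine le_trans (Finset.card_le_card ?_) hxdeg
      exact Finset.filter_subset_filter _ (Finset.erase_subset _ _)
    set W : Submodule ℝ (EuclideanSpace ℝ (Fin 5)) :=
      (Submodule.span ℝ (v '' ↑N))ᗮ with hW
    -- bad subspaces to avoid
    set T1 : Finset (Submodule ℝ (EuclideanSpace ℝ (Fin 5))) :=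
      (S'.powerset.filter (fun N' => N'.card ≤ 2)).image
        (fun N' : Finset (Fin n) => Submodule.span ℝ (v '' (↑N' : Set (Fin n)))) with hT1
    set T2 : Finset (Submodule ℝ (EuclideanSpace ℝ (Fin 5))) :=
      (S' \ N).image (fun j => (ℝ ∙ (v j))ᗮ) with hT2
    have hspan_small : ∀ N' : Finset (Fin n), N'.card ≤ 2 →
        Module.finrank ℝ (Submodule.span ℝ (v '' ↑N')) ≤ 2 := by
      intro N' hN'
      have h1 : (v '' ↑N') = ↑(N'.image v) := (Finset.coe_image).symm
      rw [h1]
      exact le_trans (finrank_span_finset_le_card (N'.image v))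
        (le_trans (Finset.card_image_le) hN')
    have hWrank : 3 ≤ Module.finrank ℝ W := by
      rw [hW]
      have h1 := Submodule.finrank_add_finrank_orthogonal
        (K := Submodule.span ℝ (v '' (↑N : Set (Fin n))))
      have h2 := hspan_small N hNcard
      rw [finrank_euclideanSpace_fin] at h1
      omega
    have hT : ∀ U ∈ T1 ∪ T2, ¬ W ≤ U := by
      intro U hU hle
      rw [Finset.mem_union] at hU
      rcases hU with hU | hU
      · rw [hT1, Finset.mem_image] at hU
        obtain ⟨N', hN', rfl⟩ := hU
        rw [Finset.mem_filter, Finset.mem_powerset] at hN'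
        have := Submodule.finrank_mono hle
        have := hspan_small N' hN'.2
        omega
      · rw [hT2, Finset.mem_image] at hU
        obtain ⟨j, hj, rfl⟩ := hU
        rw [Finset.mem_sdiff] at hj
        have h1 : ((ℝ ∙ (v j))ᗮ)ᗮ ≤ Wᗮ := Submodule.orthogonal_le hle
        rw [Submodule.orthogonal_orthogonal, hW,
          Submodule.orthogonal_orthogonal] at h1
        have h2 : v j ∈ Submodule.span ℝ (v '' ↑N) :=
          h1 (Submodule.mem_span_singleton_self _)
        have h3 : N ⊆ S'.erase j := by
          intro a ha
          rw [Finset.mem_erase]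
          refine ⟨?_, hNsub ha⟩
          intro rfl'
          exact hj.2 (rfl' ▸ ha)
        exact hvspan j hj.1 N h3 hNcard h2
    obtain ⟨w, hwW, hwT⟩ := avoid_subspaces W (T1 ∪ T2) hT
    have hwspan : ∀ N' : Finset (Fin n), N' ⊆ S' → N'.card ≤ 2 →
        w ∉ Submodule.span ℝ (v '' ↑N') := by
      intro N' h1 h2
      refine hwT _ (Finset.mem_union_left _ ?_)
      rw [hT1, Finset.mem_image]
      exact ⟨N', by rw [Finset.mem_filter, Finset.mem_powerset]; exact ⟨h1, h2⟩, rfl⟩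
    have hwN : ∀ j ∈ N, ⟪w, v j⟫ = 0 := by
      intro j hj
      have h1 : v j ∈ Submodule.span ℝ (v '' ↑N) :=
        Submodule.subset_span ⟨j, hj, rfl⟩
      have h2 := (Submodule.mem_orthogonal _ _).mp hwW (v j) h1
      rw [real_inner_comm] at h2
      exact h2
    have hwNot : ∀ j ∈ S', j ∉ N → ⟪w, v j⟫ ≠ 0 := by
      intro j hj hjN h0
      refine hwT ((ℝ ∙ (v j))ᗮ) (Finset.mem_union_right _ ?_) ?_
      · rw [hT2, Finset.mem_image]
        exact ⟨j, Finset.mem_sdiff.mpr ⟨hj, hjN⟩, rfl⟩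
      · exact (Submodule.mem_orthogonal_singleton_iff_inner_left).mpr h0
    set v' := Function.update v x w with hv'
    have hv'x : v' x = w := Function.update_self _ _ _
    have hv'ne : ∀ a, a ≠ x → v' a = v a := fun a ha => Function.update_of_ne ha _ _
    have himg : ∀ M : Finset (Fin n), x ∉ M → v' '' ↑M = v '' ↑M := by
      intro M hM
      apply Set.image_congr
      intro a ha
      exact hv'ne a (fun h => hM (h ▸ ha))
    have hmem : ∀ i ∈ S, i = x ∨ i ∈ S' := by
      intro i hi
      rcases eq_or_ne i x with h | h
      · exact Or.inl h
      · exact Or.inr (Finset.mem_erase.mpr ⟨h, hi⟩)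
    refine ⟨v', ?_, ?_⟩
    · intro i hi j hj hij
      rcases hmem i hi with rfl | hi' <;> rcases hmem j hj with rfl | hj'
      · exact absurd rfl hij
      · rw [hv'x, hv'ne j (Finset.mem_erase.mp hj').1]
        by_cases hadj : G.Adj i j
        · exact iff_of_true (hwN j (Finset.mem_filter.mpr ⟨hj', hadj⟩)) hadj
        · exact iff_of_false (hwNot j hj' (fun h => hadj (Finset.mem_filter.mp h).2)) hadj
      · rw [hv'x, hv'ne i (Finset.mem_erase.mp hi').1, real_inner_comm, G.adj_comm]
        by_cases hadj : G.Adj j i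
        · exact iff_of_true (hwN i (Finset.mem_filter.mpr ⟨hi', hadj⟩)) hadj
        · exact iff_of_false (hwNot i hi' (fun h => hadj (Finset.mem_filter.mp h).2)) hadj
      · rw [hv'ne i (Finset.mem_erase.mp hi').1, hv'ne j (Finset.mem_erase.mp hj').1]
        exact hvinner i hi' j hj' hij
    · intro i hi N' hN' hN'card
      rcases hmem i hi with rfl | hi'
      · -- i = x
        have hN'S' : N' ⊆ S' := by rw [hS']; exact hN'
        have hxN' : i ∉ N' := fun h => (Finset.mem_erase.mp (hN' h)).1 rfl
        rw [hv'x, himg N' hxN']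
        exact hwspan N' hN'S' hN'card
      · rw [hv'ne i (Finset.mem_erase.mp hi').1]
        by_cases hxN' : x ∈ N'
        · -- exchange argument
          set M := N'.erase x with hM
          have hMsub : M ⊆ S'.erase i := by
            intro a ha
            rw [hM, Finset.mem_erase] at ha
            have haS : a ∈ S.erase i := hN' ha.2
            rw [Finset.mem_erase] at haS ⊢
            exact ⟨haS.1, Finset.mem_erase.mpr ⟨ha.1, haS.2⟩⟩
          have hMcard : M.card ≤ 1 := by
            rw [hM, Finset.card_erase_of_mem hxN']
            omega
          have hMx : x ∉ M := Finset.notMem_erase _ _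
          intro hcontra
          have himgN' : v' '' ↑N' = insert w (v '' ↑M) := by
            rw [← Finset.insert_erase hxN', ← hM, Finset.coe_insert,
              Set.image_insert_eq, hv'x, himg M hMx]
          rw [himgN', Submodule.mem_span_insert] at hcontra
          obtain ⟨a, z, hz, heq⟩ := hcontra
          rcases eq_or_ne a 0 with rfl | ha0
          · rw [zero_smul, zero_add] at heq
            exact hvspan i hi' M hMsub (le_trans hMcard one_le_two) (heq ▸ hz)
          · have hw_eq : w = a⁻¹ • (v i - z) := by
              rw [heq, add_sub_cancel_right, smul_smul, inv_mul_cancel₀ ha0, one_smul]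
            set K := Submodule.span ℝ (v '' ↑(insert i M)) with hK
            have hviK : v i ∈ K :=
              Submodule.subset_span ⟨i, by simp, rfl⟩
            have hzK : z ∈ K := by
              refine Submodule.span_mono (Set.image_mono ?_) hz
              rw [Finset.coe_insert]
              exact Set.subset_insert _ _
            have hwK : w ∈ K := hw_eq ▸ K.smul_mem _ (K.sub_mem hviK hzK)
            have hsub2 : insert i M ⊆ S' := by
              intro a' ha'
              rw [Finset.mem_insert] at ha'
              rcases ha' with rfl | ha'
              · exact hi'
              · exact Finset.mem_of_mem_erase (hMsub ha')
            have hcard2 : (insert i M).card ≤ 2 :=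
              le_trans (Finset.card_insert_le _ _) (by omega)
            exact hwspan _ hsub2 hcard2 hwK
        · have hsub : N' ⊆ S'.erase i := by
            intro a ha
            have haS : a ∈ S.erase i := hN' ha
            rw [Finset.mem_erase] at haS ⊢
            refine ⟨haS.1, Finset.mem_erase.mpr ⟨?_, haS.2⟩⟩
            intro rfl'
            exact hxN' (rfl' ▸ ha)
          rw [himg N' hxN']
          exact hvspan i hi' N' hsub hN'card

open RealInnerProductSpace in
theorem msr_le_five_of_vectors {n : ℕ} (G : SimpleGraph (Fin n))
    (v : Fin n → EuclideanSpace ℝ (Fin 5))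
    (hv : ∀ i ∈ (Finset.univ : Finset (Fin n)), ∀ j ∈ (Finset.univ : Finset (Fin n)),
        i ≠ j → (⟪v i, v j⟫ = 0 ↔ G.Adj i j)) :
    msr Gᶜ ≤ 5 := by
  classical
  set B : Matrix (Fin 5) (Fin n) ℝ := Matrix.of (fun k i => v i k) with hB
  set A : Matrix (Fin n) (Fin n) ℝ := B.transpose * B with hA
  have hAij : ∀ i j, A i j = ⟪v i, v j⟫ := by
    intro i j
    rw [hA, Matrix.mul_apply]
    simp [hB, PiLp.inner_apply, RCLike.inner_apply, mul_comm]
  have hpsd : A.PosSemidef := by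
    rw [hA, ← Matrix.conjTranspose_eq_transpose_of_trivial]
    exact Matrix.posSemidef_conjTranspose_mul_self B
  have hpat : ∀ i j : Fin n, i ≠ j → (A i j ≠ 0 ↔ Gᶜ.Adj i j) := by
    intro i j hij
    rw [hAij, SimpleGraph.compl_adj]
    have h := hv i (Finset.mem_univ i) j (Finset.mem_univ j) hij
    constructor
    · intro h0
      exact ⟨hij, fun hadj => h0 (h.mpr hadj)⟩
    · intro ⟨_, hnadj⟩ h0
      exact hnadj (h.mp h0)
  have hmem : A.rank ∈ { r : ℕ | ∃ A : Matrix (Fin n) (Fin n) ℝ, A.PosSemidef ∧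
      (∀ i j : Fin n, i ≠ j → (A i j ≠ 0 ↔ Gᶜ.Adj i j)) ∧ A.rank = r } :=
    ⟨A, hpsd, hpat, rfl⟩
  refine le_trans (Nat.sInf_le hmem) ?_
  rw [hA, Matrix.rank_transpose_mul_self]
  exact Matrix.rank_le_height B

/-- If `G` is a cactus graph then `msr(Ḡ) ≤ 5`. -/
theorem msr_complement_le_five_of_cactus {n : ℕ}
    (G : SimpleGraph (Fin n)) (hG : IsCactus G) :
    msr Gᶜ ≤ 5 := by
  classical
  letI : DecidableRel G.Adj := Classical.decRel _
  have hd : ∀ S : Finset (Fin n), S.Nonempty →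
      ∃ x ∈ S, (S.filter (G.Adj x)).card ≤ 2 :=
    fun S hS => cactus_degeneracy hG.2 S hS
  obtain ⟨v, hvinner, -⟩ := exists_vectors hd n Finset.univ (by simp)
  exact msr_le_five_of_vectors G v hvinner
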